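/- For any three non-collinear points A, B, C in the plane, there exists a pair of distinct points P and Q such that the parallelogram and isosceles conditions hold: the midpoint of PQ is the midpoint of AB, and dist(C,P) = dist(C,Q). Consequently the unlabelled range measurements from P and from Q to {A,B,C} coincide. -/

import Mathlib

theorem exists_confounding_pair_range_only
    (A B C : EuclideanSpace ℝ (Fin 2))
    (hncol : ¬ Collinear ℝ ({A, B, C} : Set (EuclideanSpace ℝ (Fin 2)))) :
    ∃ P Q : EuclideanSpace ℝ (Fin 2), P ≠ Q ∧
      midpoint ℝ P Q = midpoint ℝ A B ∧
      dist C P = dist C Q ∧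
      ({dist P A, dist P B, dist P C} : Multiset ℝ) =
        ({dist Q A, dist Q B, dist Q C} : Multiset ℝ) := by
  set M := midpoint ℝ A B with hM
  have hCM : C ≠ M := by
    intro h
    apply hncol
    have : C ∈ affineSpan ℝ ({A, B} : Set (EuclideanSpace ℝ (Fin 2))) := by
      rw [h, hM]
      rw [← lineMap_inv_two]
      exact AffineMap.lineMap_mem_affineSpan_pair _ _ _
    have hc3 : Collinear ℝ ({C, A, B} : Set (EuclideanSpace ℝ (Fin 2))) :=
      collinear_insert_of_mem_affineSpan_pair this
    have hset : ({A, B, C} : Set (EuclideanSpace ℝ (Fin 2))) = {C, A, B} := by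
      ext x; simp; tauto
    rw [hset]; exact hc3
  set w : EuclideanSpace ℝ (Fin 2) := C - M with hw
  have hw0 : w ≠ 0 := sub_ne_zero.mpr hCM
  set v : EuclideanSpace ℝ (Fin 2) := WithLp.toLp 2 ![-(w 1), w 0] with hv
  have hv0 : v ≠ 0 := by
    intro h
    apply hw0
    have h0 : v 0 = 0 := by rw [h]; rfl
    have h1 : v 1 = 0 := by rw [h]; rfl
    simp [hv] at h0 h1
    ext i
    fin_cases i <;> simp [h0, h1]
  have hperp : (inner ℝ w v : ℝ) = 0 := by
    rw [PiLp.inner_apply]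
    simp [Fin.sum_univ_two, hv]
    ring
  refine ⟨M + v, M - v, ?_, ?_, ?_, ?_⟩
  · intro h
    apply hv0
    have h2 : v + v = 0 := by
      have := sub_eq_zero.mpr h
      abel_nf at this ⊢
      simpa using this
    have h3 : (2:ℝ) • v = 0 := by rw [two_smul]; exact h2
    simpa using h3
  · rw [hM, midpoint_eq_smul_add, midpoint_eq_smul_add, invOf_eq_inv]
    module
  · rw [dist_eq_norm, dist_eq_norm]
    have e1 : C - (M + v) = w - v := by rw [hw]; abel
    have e2 : C - (M - v) = w + v := by rw [hw]; abel
    rw [e1, e2]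
    have := norm_add_sq_real w v
    have := norm_sub_sq_real w v
    nlinarith [norm_nonneg (w - v), norm_nonneg (w + v)]
  · have hab : dist (M + v) A = dist (M - v) B := by
      rw [dist_eq_norm, dist_eq_norm, ← norm_neg (M - v - B)]
      congr 1
      rw [hM, midpoint_eq_smul_add, invOf_eq_inv]
      module
    have hba : dist (M + v) B = dist (M - v) A := by
      rw [dist_eq_norm, dist_eq_norm, ← norm_neg (M - v - A)]
      congr 1
      rw [hM, midpoint_eq_smul_add, invOf_eq_inv]
      module
    have hc : dist (M + v) C = dist (M - v) C := by
      rw [dist_comm, dist_comm (M - v)]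
      rw [dist_eq_norm, dist_eq_norm]
      have e1 : C - (M + v) = w - v := by rw [hw]; abel
      have e2 : C - (M - v) = w + v := by rw [hw]; abel
      rw [e1, e2]
      have := norm_add_sq_real w v
      have := norm_sub_sq_real w v
      nlinarith [norm_nonneg (w - v), norm_nonneg (w + v)]
    rw [hab, hba, hc]
    rw [Multiset.insert_eq_cons, Multiset.insert_eq_cons, Multiset.insert_eq_cons,
      Multiset.insert_eq_cons, Multiset.cons_swap]
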